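/- arXiv:2307.12141 — 2 statements merged into one kernel-verified Lean document; each statement's English description precedes it below -/
import Mathlib

section
/- For P(x) = x_1² + ⋯ + x_p² − x_{p+1}² − ⋯ − x_n² on ℝ^n and complex s, t, at points where P(x) > 0 and P(y) > 0: P(∂_x − ∂_y)(P(x)^{s+1} P(y)^{t+1}) = c_{s,t}(x,y) · P(x)^s P(y)^t, where c_{s,t}(x,y) = 2(t+1)(2t+n)P(x) − 8(s+1)(t+1)P(x,y) + 2(s+1)(2s+n)P(y), with P(x,y) the polarization of P. -/
set_option autoImplicit false

open Complex Finset

/-- The quadratic form `P(x) = x_1² + ⋯ + x_p² − x_{p+1}² − ⋯ − x_n²` on `ℝⁿ`, `n = p+q`. -/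
def Ppq (p q : ℕ) (x : Fin (p + q) → ℝ) : ℝ :=
  ∑ j : Fin (p + q), (if (j : ℕ) < p then (1 : ℝ) else -1) * x j ^ 2

/-- The polarization `P(x,y) = ∑_{j≤p} x_j y_j − ∑_{j>p} x_j y_j`. -/
def PpqBil (p q : ℕ) (x y : Fin (p + q) → ℝ) : ℝ :=
  ∑ j : Fin (p + q), (if (j : ℕ) < p then (1 : ℝ) else -1) * x j * y j

/-- Partial derivative `∂_{x_j}` (first factor) of a function on `ℝⁿ × ℝⁿ`. -/
noncomputable def pdX {n : ℕ} (j : Fin n) (f : (Fin n → ℝ) × (Fin n → ℝ) → ℂ) :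
    (Fin n → ℝ) × (Fin n → ℝ) → ℂ :=
  fun z => fderiv ℝ f z (Pi.single j 1, 0)

/-- Partial derivative `∂_{y_j}` (second factor) of a function on `ℝⁿ × ℝⁿ`. -/
noncomputable def pdY {n : ℕ} (j : Fin n) (f : (Fin n → ℝ) × (Fin n → ℝ) → ℂ) :
    (Fin n → ℝ) × (Fin n → ℝ) → ℂ :=
  fun z => fderiv ℝ f z (0, Pi.single j 1)

/-- The directional derivative `∂_{x_j} − ∂_{y_j}`. -/
noncomputable def pdD {n : ℕ} (j : Fin n) (f : (Fin n → ℝ) × (Fin n → ℝ) → ℂ) :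
    (Fin n → ℝ) × (Fin n → ℝ) → ℂ :=
  fun z => fderiv ℝ f z (Pi.single j 1, -Pi.single j 1)

/-- The operator `P(∂_x − ∂_y) = ∑_{j≤p} (∂_{x_j} − ∂_{y_j})² − ∑_{j>p} (∂_{x_j} − ∂_{y_j})²`. -/
noncomputable def PDiffOp (p q : ℕ) (f : (Fin (p + q) → ℝ) × (Fin (p + q) → ℝ) → ℂ) :
    (Fin (p + q) → ℝ) × (Fin (p + q) → ℝ) → ℂ :=
  fun z => ∑ j : Fin (p + q), (if (j : ℕ) < p then (1 : ℂ) else -1) * pdD j (pdD j f) z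


def epsR (p : ℕ) {n : ℕ} (j : Fin n) : ℝ := if (j : ℕ) < p then 1 else -1
def epsC (p : ℕ) {n : ℕ} (j : Fin n) : ℂ := if (j : ℕ) < p then 1 else -1

noncomputable def LP (p q : ℕ) (x : Fin (p + q) → ℝ) : (Fin (p + q) → ℝ) →L[ℝ] ℝ :=
  ∑ j : Fin (p + q), (2 * epsR p j * x j) • ContinuousLinearMap.proj j

lemma hasFDerivAt_Ppq (p q : ℕ) (x : Fin (p + q) → ℝ) :
    HasFDerivAt (Ppq p q) (LP p q x) x := by
  have h : ∀ j : Fin (p + q), HasFDerivAt (fun x : Fin (p + q) → ℝ => epsR p j * (x j * x j))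
      ((2 * epsR p j * x j) • (ContinuousLinearMap.proj j : (Fin (p + q) → ℝ) →L[ℝ] ℝ)) x := by
    intro j
    have h1 : HasFDerivAt (fun x : Fin (p + q) → ℝ => x j)
        (ContinuousLinearMap.proj j : (Fin (p + q) → ℝ) →L[ℝ] ℝ) x :=
      (ContinuousLinearMap.proj j : (Fin (p + q) → ℝ) →L[ℝ] ℝ).hasFDerivAt
    have h2 := (h1.fun_mul h1).const_mul (epsR p j)
    refine h2.congr_fderiv ?_
    ext v
    simp [smul_smul]
    ring
  have h2 := HasFDerivAt.fun_sum (fun j (_ : j ∈ Finset.univ) => h j)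
  have he : Ppq p q = fun x => ∑ j : Fin (p + q), epsR p j * (x j * x j) := by
    ext x; simp [Ppq, epsR, sq]
  rw [he, LP]
  exact h2

lemma LP_apply_single (p q : ℕ) (x : Fin (p + q) → ℝ) (j : Fin (p + q)) :
    LP p q x (Pi.single j 1) = 2 * epsR p j * x j := by
  simp [LP, ContinuousLinearMap.sum_apply, Pi.single_apply, mul_ite]

lemma LP_apply_neg_single (p q : ℕ) (x : Fin (p + q) → ℝ) (j : Fin (p + q)) :
    LP p q x (-Pi.single j 1) = -(2 * epsR p j * x j) := by
  rw [map_neg, LP_apply_single]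
noncomputable def FF (p q : ℕ) (a b : ℂ) (w : (Fin (p + q) → ℝ) × (Fin (p + q) → ℝ)) : ℂ :=
  (Ppq p q w.1 : ℂ) ^ a * (Ppq p q w.2 : ℂ) ^ b

lemma FF_hasF (p q : ℕ) (a b : ℂ) (z : (Fin (p + q) → ℝ) × (Fin (p + q) → ℝ))
    (hx : 0 < Ppq p q z.1) (hy : 0 < Ppq p q z.2) :
    ∃ L : ((Fin (p + q) → ℝ) × (Fin (p + q) → ℝ)) →L[ℝ] ℂ, HasFDerivAt (FF p q a b) L z ∧ ∀ j : Fin (p + q),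
      L (Pi.single j 1, -Pi.single j 1)
        = 2 * epsC p j * (a * (z.1 j : ℂ) * FF p q (a - 1) b z
            - b * (z.2 j : ℂ) * FF p q a (b - 1) z) := by
  have hPx : HasFDerivAt (fun w : (Fin (p + q) → ℝ) × (Fin (p + q) → ℝ) => Ppq p q w.1)
      ((LP p q z.1).comp (ContinuousLinearMap.fst ℝ _ _)) z :=
    (hasFDerivAt_Ppq p q z.1).comp z hasFDerivAt_fst
  have hPy : HasFDerivAt (fun w : (Fin (p + q) → ℝ) × (Fin (p + q) → ℝ) => Ppq p q w.2)
      ((LP p q z.2).comp (ContinuousLinearMap.snd ℝ _ _)) z :=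
    (hasFDerivAt_Ppq p q z.2).comp z hasFDerivAt_snd
  have hPxC := Complex.ofRealCLM.hasFDerivAt.comp z hPx
  have hPyC := Complex.ofRealCLM.hasFDerivAt.comp z hPy
  have hsx : ((Ppq p q z.1 : ℝ) : ℂ) ∈ Complex.slitPlane := Or.inl (by simpa using hx)
  have hsy : ((Ppq p q z.2 : ℝ) : ℂ) ∈ Complex.slitPlane := Or.inl (by simpa using hy)
  have hcx : HasDerivAt (fun u : ℂ => u ^ a) (a * ((Ppq p q z.1 : ℝ) : ℂ) ^ (a - 1))
      ((Ppq p q z.1 : ℝ) : ℂ) := (Complex.hasStrictDerivAt_cpow_const hsx).hasDerivAt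
  have hcy : HasDerivAt (fun u : ℂ => u ^ b) (b * ((Ppq p q z.2 : ℝ) : ℂ) ^ (b - 1))
      ((Ppq p q z.2 : ℝ) : ℂ) := (Complex.hasStrictDerivAt_cpow_const hsy).hasDerivAt
  have h1 := (HasFDerivAt.restrictScalars ℝ hcx.hasFDerivAt).comp z hPxC
  have h2 := (HasFDerivAt.restrictScalars ℝ hcy.hasFDerivAt).comp z hPyC
  refine ⟨_, h1.mul h2, ?_⟩
  intro j
  simp only [ContinuousLinearMap.add_apply, ContinuousLinearMap.smul_apply,
    ContinuousLinearMap.comp_apply, ContinuousLinearMap.coe_restrictScalars',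
    ContinuousLinearMap.smulRight_apply, ContinuousLinearMap.one_apply,
    ContinuousLinearMap.coe_fst', ContinuousLinearMap.coe_snd',
    LP_apply_single, LP_apply_neg_single, smul_eq_mul, Complex.ofRealCLM_apply]
  push_cast
  simp only [FF, epsR, epsC]
  by_cases hj : (j : ℕ) < p <;> simp [hj] <;> ring
lemma diff_FF (p q : ℕ) (a b : ℂ) (z : (Fin (p + q) → ℝ) × (Fin (p + q) → ℝ))
    (hx : 0 < Ppq p q z.1) (hy : 0 < Ppq p q z.2) :
    DifferentiableAt ℝ (FF p q a b) z :=
  (FF_hasF p q a b z hx hy).choose_spec.1.differentiableAt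

lemma pdD_FF (p q : ℕ) (a b : ℂ) (j : Fin (p + q))
    (z : (Fin (p + q) → ℝ) × (Fin (p + q) → ℝ))
    (hx : 0 < Ppq p q z.1) (hy : 0 < Ppq p q z.2) :
    pdD j (FF p q a b) z = 2 * epsC p j * (a * (z.1 j : ℂ) * FF p q (a - 1) b z
        - b * (z.2 j : ℂ) * FF p q a (b - 1) z) := by
  obtain ⟨L, hL, hLd⟩ := FF_hasF p q a b z hx hy
  unfold pdD
  rw [hL.fderiv]
  exact hLd j

variable {n : ℕ}

lemma pdD_mul (j : Fin n) {f g : (Fin n → ℝ) × (Fin n → ℝ) → ℂ}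
    {z : (Fin n → ℝ) × (Fin n → ℝ)}
    (hf : DifferentiableAt ℝ f z) (hg : DifferentiableAt ℝ g z) :
    pdD j (fun w => f w * g w) z = pdD j f z * g z + f z * pdD j g z := by
  unfold pdD
  rw [fderiv_fun_mul hf hg]
  simp [smul_eq_mul]
  ring

lemma pdD_const_mul (j : Fin n) (c : ℂ) {f : (Fin n → ℝ) × (Fin n → ℝ) → ℂ}
    {z : (Fin n → ℝ) × (Fin n → ℝ)} (hf : DifferentiableAt ℝ f z) :
    pdD j (fun w => c * f w) z = c * pdD j f z := by
  unfold pdD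
  rw [fderiv_const_mul hf c]
  simp

lemma pdD_sub (j : Fin n) {f g : (Fin n → ℝ) × (Fin n → ℝ) → ℂ}
    {z : (Fin n → ℝ) × (Fin n → ℝ)}
    (hf : DifferentiableAt ℝ f z) (hg : DifferentiableAt ℝ g z) :
    pdD j (fun w => f w - g w) z = pdD j f z - pdD j g z := by
  unfold pdD
  rw [fderiv_fun_sub hf hg]
  simp

lemma diff_X (j k : Fin n) (z : (Fin n → ℝ) × (Fin n → ℝ)) :
    DifferentiableAt ℝ (fun w : (Fin n → ℝ) × (Fin n → ℝ) => ((w.1 k : ℝ) : ℂ)) z := by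
  have h : HasFDerivAt (fun w : (Fin n → ℝ) × (Fin n → ℝ) => ((w.1 k : ℝ) : ℂ))
      (Complex.ofRealCLM.comp ((ContinuousLinearMap.proj k).comp
        (ContinuousLinearMap.fst ℝ _ _))) z :=
    Complex.ofRealCLM.hasFDerivAt.comp z
      ((ContinuousLinearMap.proj k : (Fin n → ℝ) →L[ℝ] ℝ).hasFDerivAt.comp z hasFDerivAt_fst)
  exact h.differentiableAt

lemma diff_Y (j k : Fin n) (z : (Fin n → ℝ) × (Fin n → ℝ)) :
    DifferentiableAt ℝ (fun w : (Fin n → ℝ) × (Fin n → ℝ) => ((w.2 k : ℝ) : ℂ)) z := by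
  have h : HasFDerivAt (fun w : (Fin n → ℝ) × (Fin n → ℝ) => ((w.2 k : ℝ) : ℂ))
      (Complex.ofRealCLM.comp ((ContinuousLinearMap.proj k).comp
        (ContinuousLinearMap.snd ℝ _ _))) z :=
    Complex.ofRealCLM.hasFDerivAt.comp z
      ((ContinuousLinearMap.proj k : (Fin n → ℝ) →L[ℝ] ℝ).hasFDerivAt.comp z hasFDerivAt_snd)
  exact h.differentiableAt

lemma pdD_X (j : Fin n) (z : (Fin n → ℝ) × (Fin n → ℝ)) :
    pdD j (fun w : (Fin n → ℝ) × (Fin n → ℝ) => ((w.1 j : ℝ) : ℂ)) z = 1 := by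
  unfold pdD
  have h : HasFDerivAt (fun w : (Fin n → ℝ) × (Fin n → ℝ) => ((w.1 j : ℝ) : ℂ))
      (Complex.ofRealCLM.comp ((ContinuousLinearMap.proj j).comp
        (ContinuousLinearMap.fst ℝ _ _))) z :=
    Complex.ofRealCLM.hasFDerivAt.comp z
      ((ContinuousLinearMap.proj j : (Fin n → ℝ) →L[ℝ] ℝ).hasFDerivAt.comp z hasFDerivAt_fst)
  rw [h.fderiv]
  simp

lemma pdD_Y (j : Fin n) (z : (Fin n → ℝ) × (Fin n → ℝ)) :
    pdD j (fun w : (Fin n → ℝ) × (Fin n → ℝ) => ((w.2 j : ℝ) : ℂ)) z = -1 := by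
  unfold pdD
  have h : HasFDerivAt (fun w : (Fin n → ℝ) × (Fin n → ℝ) => ((w.2 j : ℝ) : ℂ))
      (Complex.ofRealCLM.comp ((ContinuousLinearMap.proj j).comp
        (ContinuousLinearMap.snd ℝ _ _))) z :=
    Complex.ofRealCLM.hasFDerivAt.comp z
      ((ContinuousLinearMap.proj j : (Fin n → ℝ) →L[ℝ] ℝ).hasFDerivAt.comp z hasFDerivAt_snd)
  rw [h.fderiv]
  simp
/-- for `P(x) = x_1² + ⋯ + x_p² − x_{p+1}² − ⋯ − x_n²` and complex `s, t`,
at points where `P(x) > 0` and `P(y) > 0`: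
`P(∂_x − ∂_y)(P(x)^{s+1} P(y)^{t+1}) = c_{s,t}(x,y) P(x)^s P(y)^t`, where
`c_{s,t}(x,y) = 2(t+1)(2t+n)P(x) − 8(s+1)(t+1)P(x,y) + 2(s+1)(2s+n)P(y)`. -/
theorem stmt_12 (p q : ℕ) (s t : ℂ)
    (z : (Fin (p + q) → ℝ) × (Fin (p + q) → ℝ))
    (hx : 0 < Ppq p q z.1) (hy : 0 < Ppq p q z.2) :
    PDiffOp p q (fun w => (Ppq p q w.1 : ℂ) ^ (s + 1) * (Ppq p q w.2 : ℂ) ^ (t + 1)) z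
      = (2 * (t + 1) * (2 * t + (p + q : ℂ)) * (Ppq p q z.1 : ℂ)
          - 8 * (s + 1) * (t + 1) * (PpqBil p q z.1 z.2 : ℂ)
          + 2 * (s + 1) * (2 * s + (p + q : ℂ)) * (Ppq p q z.2 : ℂ))
        * (Ppq p q z.1 : ℂ) ^ s * (Ppq p q z.2 : ℂ) ^ t := by
  classical
  have hcont1 : Continuous fun w : (Fin (p + q) → ℝ) × (Fin (p + q) → ℝ) => Ppq p q w.1 := by
    unfold Ppq; fun_prop
  have hcont2 : Continuous fun w : (Fin (p + q) → ℝ) × (Fin (p + q) → ℝ) => Ppq p q w.2 := by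
    unfold Ppq; fun_prop
  set U : Set ((Fin (p + q) → ℝ) × (Fin (p + q) → ℝ)) :=
    {w | 0 < Ppq p q w.1 ∧ 0 < Ppq p q w.2} with hUdef
  have hU : IsOpen U :=
    (isOpen_lt continuous_const hcont1).inter (isOpen_lt continuous_const hcont2)
  have hzU : z ∈ U := ⟨hx, hy⟩
  set G : Fin (p + q) → ((Fin (p + q) → ℝ) × (Fin (p + q) → ℝ)) → ℂ := fun j w =>
    2 * epsC p j * ((s + 1) * (((w.1 j : ℝ) : ℂ) * FF p q s (t + 1) w)
      - (t + 1) * (((w.2 j : ℝ) : ℂ) * FF p q (s + 1) t w)) with hGdef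
  have hG : ∀ j : Fin (p + q), ∀ w ∈ U, pdD j (FF p q (s + 1) (t + 1)) w = G j w := by
    intro j w hw
    rw [pdD_FF p q _ _ j w hw.1 hw.2]
    simp only [hGdef, add_sub_cancel_right]
    ring
  have hstep : ∀ j : Fin (p + q),
      pdD j (pdD j (FF p q (s + 1) (t + 1))) z = pdD j (G j) z := by
    intro j
    have hev : pdD j (FF p q (s + 1) (t + 1)) =ᶠ[nhds z] G j :=
      Filter.eventuallyEq_of_mem (hU.mem_nhds hzU) (hG j)
    show fderiv ℝ (pdD j (FF p q (s + 1) (t + 1))) z _ = fderiv ℝ (G j) z _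
    rw [hev.fderiv_eq]
  have dA : DifferentiableAt ℝ (FF p q s (t + 1)) z := diff_FF p q _ _ z hx hy
  have dB : DifferentiableAt ℝ (FF p q (s + 1) t) z := diff_FF p q _ _ z hx hy
  have hGval : ∀ j : Fin (p + q), pdD j (G j) z =
      2 * epsC p j * ((s + 1) * (1 * FF p q s (t + 1) z
          + ((z.1 j : ℝ) : ℂ) * (2 * epsC p j * (s * (z.1 j : ℂ) * FF p q (s - 1) (t + 1) z
              - (t + 1) * (z.2 j : ℂ) * FF p q s (t + 1 - 1) z)))
        - (t + 1) * ((-1) * FF p q (s + 1) t z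
          + ((z.2 j : ℝ) : ℂ) * (2 * epsC p j * ((s + 1) * (z.1 j : ℂ) * FF p q (s + 1 - 1) t z
              - t * (z.2 j : ℂ) * FF p q (s + 1) (t - 1) z)))) := by
    intro j
    have dX := diff_X j j z
    have dY := diff_Y j j z
    have dXA := dX.fun_mul dA
    have dYB := dY.fun_mul dB
    have d1 : DifferentiableAt ℝ
        (fun w => (s + 1) * (((w.1 j : ℝ) : ℂ) * FF p q s (t + 1) w)) z :=
      dXA.const_mul (s + 1)
    have d2 : DifferentiableAt ℝ
        (fun w => (t + 1) * (((w.2 j : ℝ) : ℂ) * FF p q (s + 1) t w)) z :=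
      dYB.const_mul (t + 1)
    have e1 := pdD_const_mul j (2 * epsC p j) (d1.fun_sub d2)
    have e2 := pdD_sub j d1 d2
    have e3 := pdD_const_mul j (s + 1) dXA
    have e4 := pdD_const_mul j (t + 1) dYB
    have e5 := pdD_mul j dX dA
    have e6 := pdD_mul j dY dB
    rw [hGdef]
    rw [e1, e2, e3, e4, e5, e6, pdD_X, pdD_Y,
      pdD_FF p q s (t + 1) j z hx hy, pdD_FF p q (s + 1) t j z hx hy]
  have hX0 : ((Ppq p q z.1 : ℝ) : ℂ) ≠ 0 := by
    simpa using ne_of_gt hx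
  have hY0 : ((Ppq p q z.2 : ℝ) : ℂ) ≠ 0 := by
    simpa using ne_of_gt hy
  have hcx : ((Ppq p q z.1 : ℝ) : ℂ) = ∑ j : Fin (p + q), epsC p j * (z.1 j : ℂ) ^ 2 := by
    simp [Ppq, epsC, apply_ite (Complex.ofReal)]
  have hcy : ((Ppq p q z.2 : ℝ) : ℂ) = ∑ j : Fin (p + q), epsC p j * (z.2 j : ℂ) ^ 2 := by
    simp [Ppq, epsC, apply_ite (Complex.ofReal)]
  have hcb : ((PpqBil p q z.1 z.2 : ℝ) : ℂ)
      = ∑ j : Fin (p + q), epsC p j * ((z.1 j : ℂ) * (z.2 j : ℂ)) := by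
    simp [PpqBil, epsC, apply_ite (Complex.ofReal), mul_assoc]
  have hmain : PDiffOp p q (fun w => (Ppq p q w.1 : ℂ) ^ (s + 1) * (Ppq p q w.2 : ℂ) ^ (t + 1)) z
      = ∑ j : Fin (p + q), (if (j : ℕ) < p then (1 : ℂ) else -1) * pdD j (G j) z := by
    unfold PDiffOp
    refine Finset.sum_congr rfl fun j _ => ?_
    rw [show (fun w : (Fin (p + q) → ℝ) × (Fin (p + q) → ℝ) =>
        (Ppq p q w.1 : ℂ) ^ (s + 1) * (Ppq p q w.2 : ℂ) ^ (t + 1)) = FF p q (s + 1) (t + 1) from rfl,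
      hstep j]
  rw [hmain]
  have hsummand : ∀ j : Fin (p + q),
      (if (j : ℕ) < p then (1 : ℂ) else -1) * pdD j (G j) z
      = (2 * (s + 1) * FF p q s (t + 1) z + 2 * (t + 1) * FF p q (s + 1) t z)
        + (4 * s * (s + 1) * FF p q (s - 1) (t + 1) z) * (epsC p j * (z.1 j : ℂ) ^ 2)
        - (8 * (s + 1) * (t + 1) * FF p q s (t + 1 - 1) z) * (epsC p j * ((z.1 j : ℂ) * (z.2 j : ℂ)))
        + (4 * t * (t + 1) * FF p q (s + 1) (t - 1) z) * (epsC p j * (z.2 j : ℂ) ^ 2) := by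
    intro j
    rw [hGval j]
    have hFst : FF p q (s + 1 - 1) t z = FF p q s (t + 1 - 1) z := by
      norm_num
    rw [hFst]
    by_cases hj : (j : ℕ) < p <;> simp only [epsC, hj, if_true, if_false] <;> ring
  rw [Finset.sum_congr rfl fun j _ => hsummand j]
  rw [Finset.sum_add_distrib, Finset.sum_sub_distrib, Finset.sum_add_distrib,
    ← Finset.mul_sum, ← Finset.mul_sum, ← Finset.mul_sum,
    ← hcx, ← hcy, ← hcb, Finset.sum_const, Finset.card_univ, Fintype.card_fin]
  -- now unfold FF values and cpow arithmetic
  have hA : FF p q s (t + 1) z = (Ppq p q z.1 : ℂ) ^ s * ((Ppq p q z.2 : ℂ) ^ t * (Ppq p q z.2 : ℂ)) := by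
    rw [FF, Complex.cpow_add _ _ hY0, Complex.cpow_one]
  have hB : FF p q (s + 1) t z = ((Ppq p q z.1 : ℂ) ^ s * (Ppq p q z.1 : ℂ)) * (Ppq p q z.2 : ℂ) ^ t := by
    rw [FF, Complex.cpow_add _ _ hX0, Complex.cpow_one]
  have hF1 : FF p q (s - 1) (t + 1) z
      = ((Ppq p q z.1 : ℂ) ^ s / (Ppq p q z.1 : ℂ)) * ((Ppq p q z.2 : ℂ) ^ t * (Ppq p q z.2 : ℂ)) := by
    rw [FF, Complex.cpow_sub _ _ hX0, Complex.cpow_one, Complex.cpow_add _ _ hY0, Complex.cpow_one]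
  have hF2 : FF p q s (t + 1 - 1) z = (Ppq p q z.1 : ℂ) ^ s * (Ppq p q z.2 : ℂ) ^ t := by
    rw [FF]; norm_num
  have hF3 : FF p q (s + 1) (t - 1) z
      = ((Ppq p q z.1 : ℂ) ^ s * (Ppq p q z.1 : ℂ)) * ((Ppq p q z.2 : ℂ) ^ t / (Ppq p q z.2 : ℂ)) := by
    rw [FF, Complex.cpow_add _ _ hX0, Complex.cpow_one, Complex.cpow_sub _ _ hY0, Complex.cpow_one]
  rw [hA, hB, hF1, hF2, hF3]
  push_cast
  field_simp
  ring
end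

section
/- Let V be a Euclidean Jordan algebra of rank r with Jordan determinant det, and let (p_{k,i})_{0≤k≤r, 1≤i≤d_k} be an orthonormal basis (for the Fischer inner product) of the span W of all translates of det, chosen compatibly with the homogeneous decomposition W = ⊕_k W_k, and set p̆_{k,i} = ∂(p_{k,i}) det. Then for all x, y ∈ V: det(x − y) = Σ_{k=0}^r (−1)^{r−k} Σ_{i=1}^{d_k} p_{k,i}(x) · p̆_{k,i}(y). -/
set_option autoImplicit false

open MvPolynomial Classical

/-- A Euclidean (formally real) Jordan algebra structure on `ℝⁿ`, with coordinates chosen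
orthonormal for the trace form, together with its rank, Jordan determinant (the top
coefficient of the generic minimal polynomial, recorded here as data with its basic
properties), Jordan trace, Jordan inverse, and Peirce constant `d`. -/
structure EuclideanJordanData (n : ℕ) where
  /-- the Jordan product -/
  jmul : (Fin n → ℝ) → (Fin n → ℝ) → (Fin n → ℝ)
  jmul_add_left : ∀ x y z, jmul (x + y) z = jmul x z + jmul y z
  jmul_smul_left : ∀ (a : ℝ) x z, jmul (a • x) z = a • jmul x z
  jmul_comm : ∀ x y, jmul x y = jmul y x
  jordan_id : ∀ x y, jmul (jmul x y) (jmul x x) = jmul x (jmul y (jmul x x))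
  /-- the unit element -/
  jone : Fin n → ℝ
  jone_jmul : ∀ x, jmul jone x = x
  /-- the rank -/
  rank : ℕ
  /-- the Jordan determinant -/
  jdet : MvPolynomial (Fin n) ℝ
  jdet_homog : jdet.IsHomogeneous rank
  jdet_one : eval jone jdet = 1
  /-- the Jordan trace -/
  jtrace : (Fin n → ℝ) →ₗ[ℝ] ℝ
  /-- Euclidean: the trace form `τ(x,y) = tr(x∘y)` is the standard inner product
  (coordinates are orthonormal for it) -/
  trace_form_eq : ∀ x y, jtrace (jmul x y) = ∑ i, x i * y i
  /-- the Jordan inverse -/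
  jinv : (Fin n → ℝ) → (Fin n → ℝ)
  jinv_spec : ∀ x, eval x jdet ≠ 0 → jmul x (jinv x) = jone
  jinv_inv : ∀ x, eval x jdet ≠ 0 → jinv (jinv x) = x
  /-- the Peirce constant `d` (common dimension of the off-diagonal Peirce spaces) -/
  peirce : ℕ
  dim_eq : 2 * n = 2 * rank + peirce * rank * (rank - 1)

/-- The translate `p_a(x) = p(x + a)` of a polynomial. -/
noncomputable def polyTranslate {n : ℕ} (p : MvPolynomial (Fin n) ℝ) (a : Fin n → ℝ) :
    MvPolynomial (Fin n) ℝ :=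
  aeval (fun i => X i + C (a i)) p

/-- The linear span of all translates of `p`. -/
noncomputable def translateSpan {n : ℕ} (p : MvPolynomial (Fin n) ℝ) :
    Submodule ℝ (MvPolynomial (Fin n) ℝ) :=
  Submodule.span ℝ (Set.range (polyTranslate p))

/-- The monomial differential operator `∂^d` on polynomials on `ℝⁿ`. -/
noncomputable def monOp {n : ℕ} (d : Fin n →₀ ℕ) (q : MvPolynomial (Fin n) ℝ) :
    MvPolynomial (Fin n) ℝ :=
  (Finset.univ : Finset (Fin n)).toList.foldr (fun i r => (⇑(pderiv i))^[d i] r) q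

/-- The constant-coefficient differential operator `∂(p)` on polynomials. -/
noncomputable def diffOp {n : ℕ} (p q : MvPolynomial (Fin n) ℝ) : MvPolynomial (Fin n) ℝ :=
  (AddMonoidAlgebra.coeff p).sum fun d c => c • monOp d q

/-- The Fischer inner product `(p,q)_F = (∂(p)q)(0)` (with respect to the positive
definite trace form, for which the coordinates are orthonormal). -/
noncomputable def fischer {n : ℕ} (p q : MvPolynomial (Fin n) ℝ) : ℝ :=
  constantCoeff (diffOp p q)

variable {n : ℕ}

lemma pderiv_polyTranslate (i : Fin n) (p : MvPolynomial (Fin n) ℝ) (a : Fin n → ℝ) :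
    pderiv i (polyTranslate p a) = polyTranslate (pderiv i p) a := by
  unfold polyTranslate
  induction p using MvPolynomial.induction_on with
  | C c => simp only [aeval_C, MvPolynomial.algebraMap_eq, pderiv_C, map_zero]
  | add p q hp hq => simp only [map_add, hp, hq]
  | mul_X p j hp =>
    rcases eq_or_ne j i with h | h
    · subst h
      simp only [map_mul, aeval_X, pderiv_mul, map_add, pderiv_C, add_zero, hp,
        pderiv_X_self, map_one]
    · simp only [map_mul, aeval_X, pderiv_mul, map_add, pderiv_C, add_zero, hp,
        pderiv_X_of_ne h, map_zero]

lemma iter_pderiv_polyTranslate (i : Fin n) (t : ℕ) (p : MvPolynomial (Fin n) ℝ)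
    (a : Fin n → ℝ) :
    (⇑(pderiv i))^[t] (polyTranslate p a) = polyTranslate ((⇑(pderiv i))^[t] p) a := by
  induction t generalizing p with
  | zero => rfl
  | succ t ih =>
    rw [Function.iterate_succ_apply, Function.iterate_succ_apply,
      pderiv_polyTranslate, ih]

lemma eval_polyTranslate (q : MvPolynomial (Fin n) ℝ) (a x : Fin n → ℝ) :
    eval x (polyTranslate q a) = eval (x + a) q := by
  unfold polyTranslate
  induction q using MvPolynomial.induction_on with
  | C c => simp only [aeval_C, MvPolynomial.algebraMap_eq, eval_C]
  | add p q hp hq => simp only [map_add, hp, hq]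
  | mul_X p j hp =>
    simp only [map_mul, aeval_X, map_add, eval_X, eval_C, hp, Pi.add_apply]

lemma constantCoeff_polyTranslate (q : MvPolynomial (Fin n) ℝ) (a : Fin n → ℝ) :
    constantCoeff (polyTranslate q a) = eval a q := by
  unfold polyTranslate
  induction q using MvPolynomial.induction_on with
  | C c => simp only [aeval_C, MvPolynomial.algebraMap_eq, constantCoeff_C, eval_C]
  | add p q hp hq => simp only [map_add, hp, hq]
  | mul_X p j hp =>
    simp only [map_mul, aeval_X, map_add, constantCoeff_X, constantCoeff_C, hp, eval_X,
      zero_add]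

lemma polyTranslate_smul (c : ℝ) (q : MvPolynomial (Fin n) ℝ) (a : Fin n → ℝ) :
    polyTranslate (c • q) a = c • polyTranslate q a := by
  unfold polyTranslate; exact map_smul (aeval _) c q

lemma iter_pderiv_add (i : Fin n) (t : ℕ) (q₁ q₂ : MvPolynomial (Fin n) ℝ) :
    (⇑(pderiv i))^[t] (q₁ + q₂) = (⇑(pderiv i))^[t] q₁ + (⇑(pderiv i))^[t] q₂ := by
  induction t generalizing q₁ q₂ with
  | zero => rfl
  | succ t ih => simp only [Function.iterate_succ_apply, map_add, ih]

lemma iter_pderiv_smul (i : Fin n) (t : ℕ) (c : ℝ) (q : MvPolynomial (Fin n) ℝ) :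
    (⇑(pderiv i))^[t] (c • q) = c • (⇑(pderiv i))^[t] q := by
  induction t generalizing q with
  | zero => rfl
  | succ t ih => simp only [Function.iterate_succ_apply, Derivation.map_smul, ih]

lemma foldr_add (l : List (Fin n)) (d : Fin n →₀ ℕ) (q₁ q₂ : MvPolynomial (Fin n) ℝ) :
    l.foldr (fun i r => (⇑(pderiv i))^[d i] r) (q₁ + q₂)
      = l.foldr (fun i r => (⇑(pderiv i))^[d i] r) q₁
        + l.foldr (fun i r => (⇑(pderiv i))^[d i] r) q₂ := by
  induction l with
  | nil => rfl
  | cons i l ih => simp only [List.foldr_cons, ih, iter_pderiv_add]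

lemma foldr_smul (l : List (Fin n)) (d : Fin n →₀ ℕ) (c : ℝ) (q : MvPolynomial (Fin n) ℝ) :
    l.foldr (fun i r => (⇑(pderiv i))^[d i] r) (c • q)
      = c • l.foldr (fun i r => (⇑(pderiv i))^[d i] r) q := by
  induction l with
  | nil => rfl
  | cons i l ih => simp only [List.foldr_cons, ih, iter_pderiv_smul]

lemma monOp_add (d : Fin n →₀ ℕ) (q₁ q₂ : MvPolynomial (Fin n) ℝ) :
    monOp d (q₁ + q₂) = monOp d q₁ + monOp d q₂ := foldr_add _ _ _ _

lemma monOp_smul (d : Fin n →₀ ℕ) (c : ℝ) (q : MvPolynomial (Fin n) ℝ) :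
    monOp d (c • q) = c • monOp d q := foldr_smul _ _ _ _

lemma monOp_polyTranslate (d : Fin n →₀ ℕ) (q : MvPolynomial (Fin n) ℝ) (a : Fin n → ℝ) :
    monOp d (polyTranslate q a) = polyTranslate (monOp d q) a := by
  unfold monOp
  induction (Finset.univ : Finset (Fin n)).toList with
  | nil => rfl
  | cons i l ih => simp only [List.foldr_cons, ih, iter_pderiv_polyTranslate]

lemma polyTranslate_sum {ι : Type*} (s : Finset ι) (f : ι → MvPolynomial (Fin n) ℝ)
    (a : Fin n → ℝ) :
    polyTranslate (∑ i ∈ s, f i) a = ∑ i ∈ s, polyTranslate (f i) a := by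
  unfold polyTranslate; exact map_sum _ _ _

lemma diffOp_polyTranslate (p q : MvPolynomial (Fin n) ℝ) (a : Fin n → ℝ) :
    diffOp p (polyTranslate q a) = polyTranslate (diffOp p q) a := by
  unfold diffOp Finsupp.sum
  rw [polyTranslate_sum]
  exact Finset.sum_congr rfl fun d _ => by
    dsimp only
    rw [monOp_polyTranslate, polyTranslate_smul]

lemma diffOp_add_right (p q₁ q₂ : MvPolynomial (Fin n) ℝ) :
    diffOp p (q₁ + q₂) = diffOp p q₁ + diffOp p q₂ := by
  unfold diffOp Finsupp.sum
  rw [← Finset.sum_add_distrib]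
  exact Finset.sum_congr rfl fun d _ => by dsimp only; rw [monOp_add, smul_add]

lemma diffOp_smul_right (p : MvPolynomial (Fin n) ℝ) (c : ℝ) (q : MvPolynomial (Fin n) ℝ) :
    diffOp p (c • q) = c • diffOp p q := by
  unfold diffOp Finsupp.sum
  rw [Finset.smul_sum]
  exact Finset.sum_congr rfl fun d _ => by dsimp only; rw [monOp_smul, smul_comm]

/-- Fischer pairing as a linear map in the second argument. -/
noncomputable def fischerL (p : MvPolynomial (Fin n) ℝ) :
    MvPolynomial (Fin n) ℝ →ₗ[ℝ] ℝ where
  toFun q := fischer p q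
  map_add' q₁ q₂ := by unfold fischer; rw [diffOp_add_right, map_add]
  map_smul' c q := by
    unfold fischer
    rw [diffOp_smul_right, constantCoeff_smul, RingHom.id_apply, smul_eq_mul]

lemma degree_single_one (i : Fin n) : (Finsupp.single i 1 : Fin n →₀ ℕ).degree = 1 := by
  simp [Finsupp.degree_apply, Finsupp.support_single_ne_zero i one_ne_zero]

lemma degree_add' (a b : Fin n →₀ ℕ) : (a + b).degree = a.degree + b.degree := by
  simp [Finsupp.degree_eq_weight_one, map_add]

lemma pderiv_isHomogeneous {φ : MvPolynomial (Fin n) ℝ} {m : ℕ} (i : Fin n)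
    (h : φ.IsHomogeneous m) : (pderiv i φ).IsHomogeneous (m - 1) := by
  have hrw : pderiv i φ = ∑ d ∈ φ.support, pderiv i (monomial d (coeff d φ)) := by
    rw [← map_sum, ← as_sum]
  rw [hrw]
  apply IsHomogeneous.sum
  intro d hd
  rw [pderiv_monomial]
  by_cases h0 : d i = 0
  · rw [h0]
    simp only [Nat.cast_zero, mul_zero, map_zero]
    exact isHomogeneous_zero _ _ _
  · apply isHomogeneous_monomial
    have hdm : d.degree = m := by
      rw [Finsupp.degree_eq_weight_one]
      exact h (mem_support_iff.mp hd)
    have hle : Finsupp.single i 1 ≤ d := Finsupp.single_le_iff.mpr (by omega)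
    have hsum : (d - Finsupp.single i 1) + Finsupp.single i 1 = d :=
      tsub_add_cancel_of_le hle
    have := congrArg Finsupp.degree hsum
    rw [degree_add', degree_single_one, hdm] at this
    omega

lemma iter_pderiv_isHomogeneous (i : Fin n) (t : ℕ) {φ : MvPolynomial (Fin n) ℝ} {m : ℕ}
    (h : φ.IsHomogeneous m) : ((⇑(pderiv i))^[t] φ).IsHomogeneous (m - t) := by
  induction t generalizing φ m with
  | zero => simpa using h
  | succ t ih =>
    rw [Function.iterate_succ_apply]
    have := ih (pderiv_isHomogeneous i h)
    rwa [Nat.sub_sub, Nat.add_comm] at this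

lemma foldr_isHomogeneous (l : List (Fin n)) (d : Fin n →₀ ℕ) {q : MvPolynomial (Fin n) ℝ}
    {r : ℕ} (h : q.IsHomogeneous r) :
    (l.foldr (fun i r => (⇑(pderiv i))^[d i] r) q).IsHomogeneous (r - (l.map d).sum) := by
  induction l with
  | nil => simpa using h
  | cons i l ih =>
    rw [List.foldr_cons]
    have := iter_pderiv_isHomogeneous i (d i) ih
    rwa [Nat.sub_sub, Nat.add_comm, ← List.sum_cons, ← List.map_cons] at this

lemma monOp_isHomogeneous (d : Fin n →₀ ℕ) {q : MvPolynomial (Fin n) ℝ} {r : ℕ}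
    (h : q.IsHomogeneous r) : (monOp d q).IsHomogeneous (r - d.degree) := by
  have h2 : ((Finset.univ : Finset (Fin n)).toList.map d).sum = d.degree := by
    rw [Finset.sum_map_toList]
    rw [Finsupp.degree_apply]
    exact (Finset.sum_subset (Finset.subset_univ _)
      (fun x _ hx => Finsupp.notMem_support_iff.mp hx)).symm
  have := foldr_isHomogeneous (Finset.univ : Finset (Fin n)).toList d h
  rwa [h2] at this

lemma diffOp_isHomogeneous {p q : MvPolynomial (Fin n) ℝ} {k r : ℕ}
    (hp : p.IsHomogeneous k) (hq : q.IsHomogeneous r) :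
    (diffOp p q).IsHomogeneous (r - k) := by
  unfold diffOp Finsupp.sum
  apply IsHomogeneous.sum
  intro d hd
  dsimp only
  have hdk : d.degree = k := by
    rw [Finsupp.degree_eq_weight_one]
    exact hp (mem_support_iff.mp hd)
  rw [smul_eq_C_mul, ← hdk]
  exact (monOp_isHomogeneous d hq).C_mul _

lemma eval_neg_isHomogeneous {φ : MvPolynomial (Fin n) ℝ} {m : ℕ}
    (h : φ.IsHomogeneous m) (y : Fin n → ℝ) :
    eval (-y) φ = (-1) ^ m * eval y φ := by
  rw [eval_eq, eval_eq, Finset.mul_sum]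
  refine Finset.sum_congr rfl fun d hd => ?_
  have hdm : ∑ i ∈ d.support, d i = m := by
    have h1 := h (mem_support_iff.mp hd)
    have h2 : d.degree = m := by rw [Finsupp.degree_eq_weight_one]; exact h1
    simpa [Finsupp.degree_apply] using h2
  have hprod : ∏ i ∈ d.support, (-y) i ^ d i = (-1 : ℝ) ^ m * ∏ i ∈ d.support, y i ^ d i := by
    rw [← hdm, ← Finset.prod_pow_eq_pow_sum, ← Finset.prod_mul_distrib]
    refine Finset.prod_congr rfl fun i _ => ?_
    rw [Pi.neg_apply, neg_pow]
  rw [hprod]; ring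

/-- generalized Taylor expansion of `det(x−y)` for a Euclidean Jordan
algebra of rank `r`. If `(p_{k,i})` is an orthonormal basis (for the Fischer inner
product) of the span `W` of all translates of `det`, compatible with the homogeneous
decomposition `W = ⊕_k W_k` (so `p_{k,i} ∈ W` is homogeneous of degree `k`), and
`p̆_{k,i} = ∂(p_{k,i}) det`, then
`det(x − y) = ∑_{k=0}^r (−1)^{r−k} ∑_{i=1}^{d_k} p_{k,i}(x) · p̆_{k,i}(y)`. -/
theorem stmt_13 {n : ℕ} (J : EuclideanJordanData n)
    (dk : Fin (J.rank + 1) → ℕ)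
    (pfam : ∀ k : Fin (J.rank + 1), Fin (dk k) → MvPolynomial (Fin n) ℝ)
    (hmem : ∀ k i, pfam k i ∈ translateSpan J.jdet)
    (hhom : ∀ k i, (pfam k i).IsHomogeneous (k : ℕ))
    (hspan : translateSpan J.jdet
      ≤ Submodule.span ℝ (Set.range fun j : Σ k : Fin (J.rank + 1), Fin (dk k) =>
          pfam j.1 j.2))
    (hortho : ∀ (j j' : Σ k : Fin (J.rank + 1), Fin (dk k)),
      fischer (pfam j.1 j.2) (pfam j'.1 j'.2) = if j = j' then 1 else 0)
    (x y : Fin n → ℝ) :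
    eval (x - y) J.jdet
      = ∑ j : Σ k : Fin (J.rank + 1), Fin (dk k),
          (-1 : ℝ) ^ (J.rank - (j.1 : ℕ)) * eval x (pfam j.1 j.2)
            * eval y (diffOp (pfam j.1 j.2) J.jdet) := by

  classical
  have hqmem : polyTranslate J.jdet (-y) ∈ translateSpan J.jdet :=
    Submodule.subset_span ⟨-y, rfl⟩
  obtain ⟨c, hc⟩ := (Submodule.mem_span_range_iff_exists_fun ℝ).mp (hspan hqmem)
  have hcj : ∀ j : Σ k : Fin (J.rank + 1), Fin (dk k),
      c j = eval (-y) (diffOp (pfam j.1 j.2) J.jdet) := by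
    intro j
    have h1 : fischerL (pfam j.1 j.2) (polyTranslate J.jdet (-y)) = c j := by
      rw [← hc, map_sum]
      have key : ∀ j' : Σ k : Fin (J.rank + 1), Fin (dk k),
          fischerL (pfam j.1 j.2) (c j' • pfam j'.1 j'.2)
            = if j = j' then c j' else 0 := by
        intro j'
        rw [map_smul, smul_eq_mul]
        have : fischerL (pfam j.1 j.2) (pfam j'.1 j'.2)
            = fischer (pfam j.1 j.2) (pfam j'.1 j'.2) := rfl
        rw [this, hortho]
        by_cases h : j = j' <;> simp [h]
      rw [Finset.sum_congr rfl (fun j' _ => key j')]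
      simp
    have h2 : fischerL (pfam j.1 j.2) (polyTranslate J.jdet (-y))
        = eval (-y) (diffOp (pfam j.1 j.2) J.jdet) := by
      have : fischerL (pfam j.1 j.2) (polyTranslate J.jdet (-y))
          = fischer (pfam j.1 j.2) (polyTranslate J.jdet (-y)) := rfl
      rw [this]
      unfold fischer
      rw [diffOp_polyTranslate, constantCoeff_polyTranslate]
    rw [← h1, h2]
  have hx : eval (x - y) J.jdet = eval x (polyTranslate J.jdet (-y)) := by
    rw [eval_polyTranslate, sub_eq_add_neg]
  rw [hx, ← hc, map_sum]
  refine Finset.sum_congr rfl fun j _ => ?_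
  rw [smul_eval, hcj j]
  have hbr := diffOp_isHomogeneous (hhom j.1 j.2) J.jdet_homog
  rw [eval_neg_isHomogeneous hbr y]
  ring
end
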